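/- Let E be a finite-dimensional real inner product space and let A : E →ₗ[ℝ] E be skew-adjoint, i.e. ⟪A u, v⟫ = −⟪u, A v⟫ for all u, v ∈ E, with rank at most 2, i.e. finrank ℝ (LinearMap.range A) ≤ 2. Then for all vectors x, u, v, w in E: ⟪A x, u⟫ * ⟪A v, w⟫ − ⟪A x, v⟫ * ⟪A u, w⟫ + ⟪A x, w⟫ * ⟪A u, v⟫ = 0. -/
import Mathlib


open scoped RealInnerProductSpace

private lemma aux_skew_self
    {E : Type*} [NormedAddCommGroup E] [InnerProductSpace ℝ E]
    (A : E →ₗ[ℝ] E)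
    (hskew : ∀ u v : E, ⟪A u, v⟫ = -⟪u, A v⟫) (z : E) : ⟪A z, z⟫ = 0 := by
  have h2 : ⟪z, A z⟫ = ⟪A z, z⟫ := real_inner_comm _ _
  linarith [hskew z z, h2]

private lemma aux_V
    {E : Type*} [NormedAddCommGroup E] [InnerProductSpace ℝ E]
    (A : E →ₗ[ℝ] E)
    (hskew : ∀ u v : E, ⟪A u, v⟫ = -⟪u, A v⟫)
    (u v w : E) (a b c : ℝ) (hc : c ≠ 0)
    (h : c • A w = a • A u + b • A v) :
    ⟪A v, w⟫ • A u + ⟪A w, u⟫ • A v + ⟪A u, v⟫ • A w = 0 := by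
  have e2 : ⟪c • A w, v⟫ = ⟪a • A u + b • A v, v⟫ := by rw [h]
  rw [inner_add_left, real_inner_smul_left, real_inner_smul_left,
    real_inner_smul_left, aux_skew_self A hskew v] at e2
  have e3 : ⟪c • A w, u⟫ = ⟪a • A u + b • A v, u⟫ := by rw [h]
  rw [inner_add_left, real_inner_smul_left, real_inner_smul_left,
    real_inner_smul_left, aux_skew_self A hskew u] at e3
  have hvw : c * ⟪A v, w⟫ = -(a * ⟪A u, v⟫) := by
    have e1 : ⟪A v, w⟫ = -⟪A w, v⟫ := by
      rw [hskew v w, real_inner_comm]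
    rw [e1]; linear_combination -e2
  have hwu : c * ⟪A w, u⟫ = -(b * ⟪A u, v⟫) := by
    have e1 : ⟪A v, u⟫ = -⟪A u, v⟫ := by
      rw [hskew v u, real_inner_comm]
    linear_combination e3 + b * e1
  have hz : c • (⟪A v, w⟫ • A u + ⟪A w, u⟫ • A v + ⟪A u, v⟫ • A w) = 0 := by
    rw [smul_add, smul_add, smul_smul, smul_smul, smul_comm c, h, hvw, hwu]
    match_scalars <;> ring
  rcases smul_eq_zero.mp hz with h' | h'
  · exact absurd h' hc
  · exact h'

private lemma aux_key
    {E : Type*} [NormedAddCommGroup E] [InnerProductSpace ℝ E]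
    [FiniteDimensional ℝ E]
    (A : E →ₗ[ℝ] E)
    (hskew : ∀ u v : E, ⟪A u, v⟫ = -⟪u, A v⟫)
    (hrank : Module.finrank ℝ (LinearMap.range A) ≤ 2)
    (u v w : E) :
    ⟪A v, w⟫ • A u + ⟪A w, u⟫ • A v + ⟪A u, v⟫ • A w = 0 := by
  have hdep : ¬ LinearIndependent ℝ ![A u, A v, A w] := by
    intro hli
    have h3 : Module.finrank ℝ (Submodule.span ℝ (Set.range ![A u, A v, A w])) = 3 := by
      rw [finrank_span_eq_card hli]; simp
    have hle : Submodule.span ℝ (Set.range ![A u, A v, A w]) ≤ LinearMap.range A := by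
      rw [Submodule.span_le]
      rintro x ⟨i, rfl⟩
      fin_cases i
      · exact ⟨u, rfl⟩
      · exact ⟨v, rfl⟩
      · exact ⟨w, rfl⟩
    have := Submodule.finrank_mono hle
    omega
  obtain ⟨g, hg, i, hi⟩ := Fintype.not_linearIndependent_iff.mp hdep
  rw [Fin.sum_univ_three] at hg
  simp only [Matrix.cons_val_zero, Matrix.cons_val_one, Matrix.head_cons,
    Matrix.cons_val_two, Matrix.tail_cons] at hg
  fin_cases i
  · -- g 0 ≠ 0 : A u in terms of A v, A w
    have h' : g 0 • A u = (-(g 1)) • A v + (-(g 2)) • A w := by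
      rw [neg_smul, neg_smul]
      rw [add_assoc] at hg
      rw [eq_neg_of_add_eq_zero_left hg, neg_add]
    have h0 := aux_V A hskew v w u (-(g 1)) (-(g 2)) (g 0) hi h'
    rw [add_rotate]
    exact h0
  · -- g 1 ≠ 0 : A v in terms of A w, A u
    have h' : g 1 • A v = (-(g 2)) • A w + (-(g 0)) • A u := by
      rw [neg_smul, neg_smul]
      have hg' : g 1 • A v + (g 2 • A w + g 0 • A u) = 0 := by
        rw [← hg]; abel
      rw [eq_neg_of_add_eq_zero_left hg', neg_add]
    have h0 := aux_V A hskew w u v (-(g 2)) (-(g 0)) (g 1) hi h'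
    rw [add_rotate, add_rotate]
    exact h0
  · -- g 2 ≠ 0 : A w in terms of A u, A v
    have h' : g 2 • A w = (-(g 0)) • A u + (-(g 1)) • A v := by
      rw [neg_smul, neg_smul]
      have hg' : g 2 • A w + (g 0 • A u + g 1 • A v) = 0 := by
        rw [← hg]; abel
      rw [eq_neg_of_add_eq_zero_left hg', neg_add]
    exact aux_V A hskew u v w (-(g 0)) (-(g 1)) (g 2) hi h'

/-- For a skew-adjoint endomorphism of rank at most 2 on a finite-dimensional real
inner product space, the trilinear expression corresponding to `X_♭ ∧ dX_♭` vanishes. -/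
theorem skew_adjoint_rank_le_two_trilinear_vanishes
    (E : Type*) [NormedAddCommGroup E] [InnerProductSpace ℝ E]
    [FiniteDimensional ℝ E]
    (A : E →ₗ[ℝ] E)
    (hskew : ∀ u v : E, ⟪A u, v⟫ = -⟪u, A v⟫)
    (hrank : Module.finrank ℝ (LinearMap.range A) ≤ 2) :
    ∀ x u v w : E,
      ⟪A x, u⟫ * ⟪A v, w⟫ - ⟪A x, v⟫ * ⟪A u, w⟫ + ⟪A x, w⟫ * ⟪A u, v⟫ = 0 := by
  intro x u v w
  have hV := aux_key A hskew hrank u v w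
  have h0 : ⟪x, (⟪A v, w⟫ • A u + ⟪A w, u⟫ • A v + ⟪A u, v⟫ • A w : E)⟫ = 0 := by
    rw [hV, inner_zero_right]
  rw [inner_add_right, inner_add_right, real_inner_smul_right,
    real_inner_smul_right, real_inner_smul_right] at h0
  have e1 : ⟪x, A u⟫ = -⟪A x, u⟫ := by have := hskew x u; linarith
  have e2 : ⟪x, A v⟫ = -⟪A x, v⟫ := by have := hskew x v; linarith
  have e3 : ⟪x, A w⟫ = -⟪A x, w⟫ := by have := hskew x w; linarith
  have e4 : ⟪A w, u⟫ = -⟪A u, w⟫ := by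
    rw [hskew w u, real_inner_comm]
  rw [e1, e2, e3, e4] at h0
  linear_combination -h0
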